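/- Let m and N be positive integers. For every permutation α ∈ S_m, the value of the so(N)-weight system on the inverse permutation satisfies w_{so(N)}(α⁻¹) = (−1)^m · w_{so(N)}(α). -/

import Mathlib

open scoped BigOperators

attribute [local instance 100] LieRing.ofAssociativeRing

/-- The standard generator `F i j = E_{i j} − E_{N+1−j, N+1−i}` of `so(N)`, viewed as an
`N × N` complex matrix (an element of `gl(N)`). -/
noncomputable def soF (N : ℕ) (i j : Fin N) : Matrix (Fin N) (Fin N) ℂ :=
  Matrix.single i j 1 - Matrix.single j.rev i.rev 1

/-- The `so(N)`-weight system on a permutation `α` of `m` elements: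
`w_{so(N)}(α) = ∑_{i : Fin m → Fin N} ι(F_{i 1, i (α 1)}) ⋯ ι(F_{i m, i (α m)})`,
an element of the universal enveloping algebra of `gl(N)`. -/
noncomputable def wso (m N : ℕ) (α : Equiv.Perm (Fin m)) :
    UniversalEnvelopingAlgebra ℂ (Matrix (Fin N) (Fin N) ℂ) :=
  ∑ i : Fin m → Fin N,
    ((List.finRange m).map fun k =>
      UniversalEnvelopingAlgebra.ι ℂ (soF N (i k) (i (α k)))).prod

lemma soF_skew (N : ℕ) (i j : Fin N) : soF N i j = - soF N j.rev i.rev := by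
  simp [soF, Fin.rev_rev, neg_sub]

lemma neg_list_prod {A : Type*} [Ring A] [Algebra ℂ A] {α : Type*} (l : List α) (f : α → A) :
    (l.map fun a => -f a).prod = ((-1 : ℂ) ^ l.length) • (l.map f).prod := by
  induction l with
  | nil => simp
  | cons a t ih =>
    simp only [List.map_cons, List.prod_cons, List.length_cons, ih, pow_succ]
    rw [mul_smul_comm, neg_mul, smul_neg, ← neg_smul, mul_neg_one]

/-- The value of the `so(N)`-weight system on the inverse permutation:
`w_{so(N)}(α⁻¹) = (−1)^m · w_{so(N)}(α)`. -/
theorem wso_inv (m N : ℕ) (hm : 0 < m) (hN : 0 < N) (α : Equiv.Perm (Fin m)) :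
    wso m N α⁻¹ = ((-1 : ℂ) ^ m) • wso m N α := by
  unfold wso
  rw [Finset.smul_sum]
  refine Fintype.sum_equiv
    (Equiv.arrowCongr (α : Equiv.Perm (Fin m)) (Fin.revPerm : Equiv.Perm (Fin N))) _ _ ?_
  intro i
  have h1 : ∀ k : Fin m,
      soF N (i k) (i (α⁻¹ k)) =
        - soF N ((Equiv.arrowCongr (α : Equiv.Perm (Fin m)) (Fin.revPerm : Equiv.Perm (Fin N)) i) k)
            ((Equiv.arrowCongr (α : Equiv.Perm (Fin m)) (Fin.revPerm : Equiv.Perm (Fin N)) i) (α k)) := by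
    intro k
    simp only [Equiv.arrowCongr_apply, Function.comp_apply, Fin.revPerm_apply,
      Equiv.symm_apply_apply, Equiv.Perm.inv_def]
    exact soF_skew N (i k) (i (α.symm k))
  calc ((List.finRange m).map fun k =>
          UniversalEnvelopingAlgebra.ι ℂ (soF N (i k) (i (α⁻¹ k)))).prod
      = ((List.finRange m).map fun k =>
          -(UniversalEnvelopingAlgebra.ι ℂ
            (soF N ((Equiv.arrowCongr (α : Equiv.Perm (Fin m)) (Fin.revPerm : Equiv.Perm (Fin N)) i) k)
              ((Equiv.arrowCongr (α : Equiv.Perm (Fin m)) (Fin.revPerm : Equiv.Perm (Fin N)) i) (α k))))).prod := by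
        congr 1
        refine List.map_congr_left fun k _ => ?_
        rw [h1 k]
        exact (UniversalEnvelopingAlgebra.ι ℂ).toLinearMap.map_neg _
    _ = ((-1 : ℂ) ^ m) • ((List.finRange m).map fun k =>
          UniversalEnvelopingAlgebra.ι ℂ
            (soF N ((Equiv.arrowCongr (α : Equiv.Perm (Fin m)) (Fin.revPerm : Equiv.Perm (Fin N)) i) k)
              ((Equiv.arrowCongr (α : Equiv.Perm (Fin m)) (Fin.revPerm : Equiv.Perm (Fin N)) i) (α k)))).prod := by
        rw [neg_list_prod, List.length_finRange]
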